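/- Let 𝒜 = {A₁, A₂} be a dynamical generating set consisting of two ℝ-linearly independent, traceless, anti-Hermitian N×N complex matrices, and let χ be a Hermitian M×M complex matrix with exactly K distinct eigenvalues. For i ∈ {1,2}, let 𝒜_i = {A₁ ⊗ I_M, A₂ ⊗ I_M, A_i ⊗ χ}. Then the commutator subalgebra [g_{𝒜_i}, g_{𝒜_i}] of the DLA generated by 𝒜_i is isomorphic, as a real Lie algebra, to the direct sum ⊕_{j=1}^{K} [g_𝒜, g_𝒜] of K copies of [g_𝒜, g_𝒜]. -/

import Mathlib

open Matrix Kronecker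

attribute [local instance 100] LieRing.ofAssociativeRing

/-- A *dynamical generating set*: a family of at least two ℝ-linearly independent,
traceless, anti-Hermitian complex matrices of a common size. -/
def IsDynGenSet {l N : ℕ} (A : Fin l → Matrix (Fin N) (Fin N) ℂ) : Prop :=
  2 ≤ l ∧ LinearIndependent ℝ A ∧ (∀ i, Matrix.trace (A i) = 0) ∧ (∀ i, (A i)ᴴ = -(A i))

/-- The dynamical Lie algebra generated by a set of matrices: the smallest real Lie
subalgebra of the matrix Lie algebra (bracket `[A,B] = AB - BA`) containing the set. -/
noncomputable def DLA {n : Type*} [Fintype n] [DecidableEq n] (S : Set (Matrix n n ℂ)) :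
    LieSubalgebra ℝ (Matrix n n ℂ) :=
  LieSubalgebra.lieSpan ℝ (Matrix n n ℂ) S

/-- The commutator subalgebra `[g,g]`, as the ℝ-linear span of brackets of elements of `g`. -/
noncomputable def commSub {n : Type*} [Fintype n] [DecidableEq n]
    (g : LieSubalgebra ℝ (Matrix n n ℂ)) : Submodule ℝ (Matrix n n ℂ) :=
  Submodule.span ℝ {x | ∃ u ∈ g, ∃ v ∈ g, x = ⁅u, v⁆}

/-- The center `Z(g) = {u ∈ g : [u,v] = 0 for all v ∈ g}`, as an ℝ-submodule. -/
noncomputable def centerSubmodule {n : Type*} [Fintype n] [DecidableEq n]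
    (g : LieSubalgebra ℝ (Matrix n n ℂ)) : Submodule ℝ (Matrix n n ℂ) where
  carrier := {u | u ∈ g ∧ ∀ v ∈ g, ⁅u, v⁆ = 0}
  add_mem' := by
    rintro a b ⟨ha, ha'⟩ ⟨hb, hb'⟩
    exact ⟨g.add_mem ha hb, fun v hv => by rw [add_lie, ha' v hv, hb' v hv, add_zero]⟩
  zero_mem' := ⟨g.zero_mem, fun v _ => zero_lie v⟩
  smul_mem' := by
    rintro c a ⟨ha, ha'⟩
    exact ⟨g.smul_mem c ha, fun v hv => by rw [smul_lie, ha' v hv, smul_zero]⟩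
open scoped DirectSum

section c1
variable {n : Type*} [Fintype n] [DecidableEq n]

/-- Bilinearity of bracket: brackets of spans land in any submodule containing
brackets of generators. -/
lemma lie_span_le_of_lie_gen {s : Set (Matrix n n ℂ)} {t : Submodule ℝ (Matrix n n ℂ)}
    (hs : ∀ x ∈ s, ∀ y ∈ s, ⁅x, y⁆ ∈ t) :
    ∀ u ∈ Submodule.span ℝ s, ∀ v ∈ Submodule.span ℝ s, ⁅u, v⁆ ∈ t := by
  intro u hu v hv
  induction hu, hv using Submodule.span_induction₂ with
  | mem_mem x y hx hy => exact hs x hx y hy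
  | zero_left y hy => simpa using t.zero_mem
  | zero_right x hx => simpa using t.zero_mem
  | add_left x y z _ _ _ h1 h2 => rw [add_lie]; exact t.add_mem h1 h2
  | add_right x y z _ _ _ h1 h2 => rw [lie_add]; exact t.add_mem h1 h2
  | smul_left r x y _ _ h => rw [smul_lie]; exact t.smul_mem r h
  | smul_right r x y _ _ h => rw [lie_smul]; exact t.smul_mem r h

lemma commSub_le (g : LieSubalgebra ℝ (Matrix n n ℂ)) : commSub g ≤ g.toSubmodule := by
  rw [commSub, Submodule.span_le]
  rintro x ⟨u, hu, v, hv, rfl⟩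
  exact g.lie_mem hu hv

lemma lie_mem_commSub {g : LieSubalgebra ℝ (Matrix n n ℂ)} {u v : Matrix n n ℂ}
    (hu : u ∈ g) (hv : v ∈ g) : ⁅u, v⁆ ∈ commSub g :=
  Submodule.subset_span ⟨u, hu, v, hv, rfl⟩

/-- `[g,g]` as a Lie subalgebra. -/
noncomputable def commSubAlg (g : LieSubalgebra ℝ (Matrix n n ℂ)) :
    LieSubalgebra ℝ (Matrix n n ℂ) :=
  { commSub g with
    lie_mem' := fun {x y} hx hy =>
      lie_mem_commSub (commSub_le g hx) (commSub_le g hy) }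

@[simp] lemma commSubAlg_toSubmodule (g : LieSubalgebra ℝ (Matrix n n ℂ)) :
    (commSubAlg g).toSubmodule = commSub g := rfl

lemma mem_commSubAlg {g : LieSubalgebra ℝ (Matrix n n ℂ)} {x : Matrix n n ℂ} :
    x ∈ commSubAlg g ↔ x ∈ commSub g := Iff.rfl

/-- The skew-adjoint matrices form a real Lie subalgebra. -/
def saLie : LieSubalgebra ℝ (Matrix n n ℂ) where
  carrier := {X | Xᴴ = -X}
  add_mem' := by
    intro a b ha hb
    simp only [Set.mem_setOf_eq] at *
    rw [conjTranspose_add, ha, hb, neg_add]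
  zero_mem' := by simp
  smul_mem' := by
    intro c a ha
    simp only [Set.mem_setOf_eq] at *
    rw [conjTranspose_smul, ha, star_trivial, smul_neg]
  lie_mem' := by
    intro a b ha hb
    simp only [Set.mem_setOf_eq] at *
    rw [Ring.lie_def, conjTranspose_sub, conjTranspose_mul, conjTranspose_mul, ha, hb]
    simp [Ring.lie_def]

lemma dla_skew {s : Set (Matrix n n ℂ)} (hs : ∀ x ∈ s, xᴴ = -x) :
    ∀ X ∈ DLA s, Xᴴ = -X := by
  intro X hX
  exact (LieSubalgebra.lieSpan_le (K := saLie)).2 hs hX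

end c1


section c2
variable {n : Type*} [Fintype n] [DecidableEq n]

/-- The (negated) trace form `B(X,Y) = -Re tr(XY)` as a real bilinear map. -/
noncomputable def Btr : Matrix n n ℂ →ₗ[ℝ] Matrix n n ℂ →ₗ[ℝ] ℝ :=
  LinearMap.mk₂ ℝ (fun X Y => -((X * Y).trace.re))
    (fun X X' Y => by rw [add_mul, trace_add, Complex.add_re]; ring)
    (fun c X Y => by
      rw [smul_mul_assoc, trace_smul]
      simp [Complex.real_smul])
    (fun X Y Y' => by rw [mul_add, trace_add, Complex.add_re]; ring)
    (fun c X Y => by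
      rw [mul_smul_comm, trace_smul]
      simp [Complex.real_smul])

lemma Btr_invariant (a b c : Matrix n n ℂ) : Btr ⁅a, b⁆ c = Btr a ⁅b, c⁆ := by
  simp only [Btr, Ring.lie_def, LinearMap.mk₂_apply, sub_mul, mul_sub, trace_sub,
    Complex.sub_re, mul_assoc]
  rw [← mul_assoc b a c, trace_mul_comm (b * a) c, ← mul_assoc c b a,
    trace_mul_comm (c * b) a]

lemma Btr_self_skew (X : Matrix n n ℂ) (hX : Xᴴ = -X) :
    Btr X X = ∑ i, ∑ j, Complex.normSq (X i j) := by
  have h : X * X = -(X * Xᴴ) := by rw [hX, mul_neg, neg_neg]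
  simp only [Btr, LinearMap.mk₂_apply, h, trace_neg, Complex.neg_re, neg_neg]
  rw [trace]
  simp only [diag_apply, mul_apply, conjTranspose_apply]
  rw [Complex.re_sum]
  rw [Finset.sum_congr rfl]
  intro i _
  rw [Complex.re_sum]
  rw [Finset.sum_congr rfl]
  intro j _
  rw [show star (X i j) = starRingEnd ℂ (X i j) from rfl, Complex.mul_conj]
  simp

lemma Btr_self_eq_zero {X : Matrix n n ℂ} (hX : Xᴴ = -X) (h : Btr X X = 0) : X = 0 := by
  rw [Btr_self_skew X hX] at h
  ext i j
  have h1 : ∀ i ∈ Finset.univ, (0:ℝ) ≤ ∑ j, Complex.normSq (X i j) :=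
    fun i _ => Finset.sum_nonneg fun j _ => Complex.normSq_nonneg _
  have h2 := (Finset.sum_eq_zero_iff_of_nonneg h1).1 h i (Finset.mem_univ i)
  have h3 := (Finset.sum_eq_zero_iff_of_nonneg
    (fun j _ => Complex.normSq_nonneg (X i j))).1 h2 j (Finset.mem_univ j)
  simpa using Complex.normSq_eq_zero.1 h3

end c2

section c3
variable {n : Type*} [Fintype n] [DecidableEq n]

/-- Perfectness of the commutator subalgebra of a skew-adjoint (compact) matrix Lie algebra. -/
lemma commSub_perfect (g : LieSubalgebra ℝ (Matrix n n ℂ)) (hsa : ∀ X ∈ g, Xᴴ = -X) :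
    commSub g ≤ Submodule.span ℝ {x | ∃ u ∈ commSub g, ∃ v ∈ commSub g, x = ⁅u, v⁆} := by
  set k := commSub g with hk
  set kk := Submodule.span ℝ {x | ∃ u ∈ k, ∃ v ∈ k, x = ⁅u, v⁆} with hkk
  have hk_le_g := commSub_le g
  have hkk_le_k : kk ≤ k := by
    rw [hkk, Submodule.span_le]
    rintro x ⟨u, hu, v, hv, rfl⟩
    exact lie_mem_commSub (hk_le_g hu) (hk_le_g hv)
  have hsk : ∀ X, X ∈ k → Xᴴ = -X := fun X hX => hsa X (hk_le_g hX)
  have hcent : ∀ X, X ∈ k → (∀ y ∈ kk, Btr X y = 0) → X = 0 := by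
    intro X hX hperp
    have hXg : X ∈ g := hk_le_g hX
    have step1 : ∀ u, u ∈ k → ⁅X, u⁆ = 0 := by
      intro u hu
      have hXu : ⁅X, u⁆ ∈ k := lie_mem_commSub hXg (hk_le_g hu)
      have hmem : ⁅u, ⁅X, u⁆⁆ ∈ kk := Submodule.subset_span ⟨u, hu, ⁅X, u⁆, hXu, rfl⟩
      have hz : Btr ⁅X, u⁆ ⁅X, u⁆ = 0 := by rw [Btr_invariant]; exact hperp _ hmem
      exact Btr_self_eq_zero (hsk _ hXu) hz
    have step2 : ∀ u, u ∈ g → ⁅X, u⁆ = 0 := by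
      intro u hu
      have hXu : ⁅X, u⁆ ∈ k := lie_mem_commSub hXg hu
      have h0 : ⁅X, ⁅X, u⁆⁆ = 0 := step1 _ hXu
      have e : ⁅X, u⁆ = -⁅u, X⁆ := (lie_skew X u).symm
      have hz : Btr ⁅X, u⁆ ⁅X, u⁆ = 0 := by
        nth_rewrite 1 [e]
        rw [map_neg, LinearMap.neg_apply, Btr_invariant, h0, map_zero, neg_zero]
      exact Btr_self_eq_zero (hsk _ hXu) hz
    have step3 : ∀ y ∈ k, Btr X y = 0 := by
      intro y hy
      induction hy using Submodule.span_induction with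
      | mem x hx =>
        obtain ⟨u, hu, v, hv, rfl⟩ := hx
        rw [← Btr_invariant, step2 u hu, map_zero]
        simp
      | zero => simp
      | add a b _ _ h1 h2 => rw [map_add, h1, h2]; simp
      | smul c a _ h1 => rw [_root_.map_smul, h1]; simp
    exact Btr_self_eq_zero (hsa X hXg) (step3 X hX)
  let f : ↥k →ₗ[ℝ] Module.Dual ℝ ↥kk :=
  { toFun := fun X => (Btr X.1).comp kk.subtype
    map_add' := fun X Y => by ext y; simp
    map_smul' := fun c X => by ext y; simp }
  have hf0 : ∀ X : ↥k, f X = 0 → X = 0 := by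
    intro X hfX
    apply Subtype.ext
    apply hcent X.1 X.2
    intro y hy
    have h2 : (Btr (X : Matrix n n ℂ)) y = (0 : Module.Dual ℝ ↥kk) ⟨y, hy⟩ :=
      congrArg (fun φ : Module.Dual ℝ ↥kk => φ ⟨y, hy⟩) hfX
    simpa using h2
  have hinj : Function.Injective f := LinearMap.ker_eq_bot.1 (LinearMap.ker_eq_bot'.2 hf0)
  have h1 : Module.finrank ℝ ↥k ≤ Module.finrank ℝ (Module.Dual ℝ ↥kk) :=
    LinearMap.finrank_le_finrank_of_injective hinj
  rw [Subspace.dual_finrank_eq] at h1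
  exact le_of_eq (Submodule.eq_of_le_of_finrank_le hkk_le_k h1).symm

end c3

section c4
variable {n m : Type*} [Fintype n] [DecidableEq n] [Fintype m] [DecidableEq m]

/-- Kronecker product with a fixed right factor, as a real-linear map. -/
def KR (C : Matrix m m ℂ) : Matrix n n ℂ →ₗ[ℝ] Matrix (n × m) (n × m) ℂ where
  toFun X := X ⊗ₖ C
  map_add' X Y := add_kronecker X Y C
  map_smul' c X := smul_kronecker c X C

@[simp] lemma KR_apply (C : Matrix m m ℂ) (X : Matrix n n ℂ) : KR C X = X ⊗ₖ C := rfl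

/-- Kronecker product with a fixed left factor, as a real-linear map. -/
def KL (X : Matrix n n ℂ) : Matrix m m ℂ →ₗ[ℝ] Matrix (n × m) (n × m) ℂ where
  toFun C := X ⊗ₖ C
  map_add' C D := kronecker_add X C D
  map_smul' c C := kronecker_smul c X C

@[simp] lemma KL_apply (X : Matrix n n ℂ) (C : Matrix m m ℂ) : KL X C = X ⊗ₖ C := rfl

lemma lie_kronecker (X Y : Matrix n n ℂ) (C D : Matrix m m ℂ) :
    ⁅X ⊗ₖ C, Y ⊗ₖ D⁆ = (X * Y) ⊗ₖ (C * D) - (Y * X) ⊗ₖ (D * C) := by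
  rw [Ring.lie_def, ← mul_kronecker_mul, ← mul_kronecker_mul]

lemma lie_kronecker_comm (X Y : Matrix n n ℂ) (C D : Matrix m m ℂ) (h : C * D = D * C) :
    ⁅X ⊗ₖ C, Y ⊗ₖ D⁆ = ⁅X, Y⁆ ⊗ₖ (C * D) := by
  rw [lie_kronecker, h, Ring.lie_def]
  exact (map_sub (KR (D * C)) (X * Y) (Y * X)).symm

lemma lie_kronecker_one_left (X Y : Matrix n n ℂ) (C : Matrix m m ℂ) :
    ⁅X ⊗ₖ (1 : Matrix m m ℂ), Y ⊗ₖ C⁆ = ⁅X, Y⁆ ⊗ₖ C := by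
  rw [lie_kronecker_comm X Y 1 C (by rw [one_mul, mul_one]), one_mul]

lemma lie_kronecker_idem (X Y : Matrix n n ℂ) (P : Matrix m m ℂ) (hP : P * P = P) :
    ⁅X ⊗ₖ P, Y ⊗ₖ P⁆ = ⁅X, Y⁆ ⊗ₖ P := by
  rw [lie_kronecker_comm X Y P P rfl, hP]

/-- `X ↦ X ⊗ 1` as a morphism of real Lie algebras. -/
def kroneckerOneLieHom : Matrix n n ℂ →ₗ⁅ℝ⁆ Matrix (n × m) (n × m) ℂ :=
  { KR (1 : Matrix m m ℂ) with
    map_lie' := fun {X Y} => (lie_kronecker_one_left X Y 1).symm }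

@[simp] lemma kroneckerOneLieHom_apply (X : Matrix n n ℂ) :
    (kroneckerOneLieHom (m := m)) X = X ⊗ₖ (1 : Matrix m m ℂ) := rfl

/-- `X ↦ X ⊗ P` for idempotent `P`, as a morphism of real Lie algebras. -/
def kroneckerIdemLieHom (P : Matrix m m ℂ) (hP : P * P = P) :
    Matrix n n ℂ →ₗ⁅ℝ⁆ Matrix (n × m) (n × m) ℂ :=
  { KR P with
    map_lie' := fun {X Y} => (lie_kronecker_idem X Y P hP).symm }

@[simp] lemma kroneckerIdemLieHom_apply (P : Matrix m m ℂ) (hP : P * P = P)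
    (X : Matrix n n ℂ) : kroneckerIdemLieHom P hP X = X ⊗ₖ P := rfl

end c4

section c5
variable {N M K : ℕ}

/-- The key structural computation: the commutator subalgebra of the DLA generated by
`{A₁ ⊗ 1, A₂ ⊗ 1, A_i ⊗ χ}` is the span of `[g,g] ⊗ P_j` over the spectral projections. -/
lemma main_commSub (A : Fin 2 → Matrix (Fin N) (Fin N) ℂ)
    (hsa : ∀ l, (A l)ᴴ = -(A l)) (i : Fin 2)
    (χ : Matrix (Fin M) (Fin M) ℂ) (P : Fin K → Matrix (Fin M) (Fin M) ℂ)
    (hPP : ∀ j l, P j * P l = if j = l then P j else 0)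
    (hPsum : ∑ j, P j = 1)
    (hchi1 : ∃ c : Fin K → ℝ, χ = ∑ j, (c j : ℂ) • P j)
    (hPpow : ∀ j, ∃ c : Fin K → ℝ, P j = ∑ a, c a • χ ^ (a : ℕ)) :
    commSub (DLA ((Set.range fun j => A j ⊗ₖ (1 : Matrix (Fin M) (Fin M) ℂ)) ∪ {A i ⊗ₖ χ}))
      = Submodule.span ℝ
          {x | ∃ X ∈ commSub (DLA (Set.range A)), ∃ j : Fin K, x = X ⊗ₖ P j} := by
  classical
  set g := DLA (Set.range A) with hg
  set S := (Set.range fun j => A j ⊗ₖ (1 : Matrix (Fin M) (Fin M) ℂ)) ∪ {A i ⊗ₖ χ} with hS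
  set H := DLA S with hH
  set k := commSub g with hk
  set T := Submodule.span ℝ {x | ∃ X ∈ k, ∃ j : Fin K, x = X ⊗ₖ P j} with hT
  have hk_le_g : k ≤ g.toSubmodule := commSub_le g
  have hgsa : ∀ X ∈ g, Xᴴ = -X := dla_skew (by rintro x ⟨l, rfl⟩; exact hsa l)
  have hAg : ∀ l, A l ∈ g := fun l => LieSubalgebra.subset_lieSpan ⟨l, rfl⟩
  have hperf := commSub_perfect g hgsa
  have hgen1 : ∀ l, A l ⊗ₖ (1 : Matrix (Fin M) (Fin M) ℂ) ∈ H :=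
    fun l => LieSubalgebra.subset_lieSpan (Or.inl ⟨l, rfl⟩)
  have hgenχ : A i ⊗ₖ χ ∈ H := LieSubalgebra.subset_lieSpan (Or.inr rfl)
  -- Step A : `g ⊗ 1 ⊆ H`
  have hA1 : ∀ X ∈ g, X ⊗ₖ (1 : Matrix (Fin M) (Fin M) ℂ) ∈ H := by
    intro X hX
    have hle : g ≤ LieSubalgebra.comap (kroneckerOneLieHom (m := Fin M)) H := by
      rw [hg, DLA]
      apply LieSubalgebra.lieSpan_le.2
      rintro x ⟨l, rfl⟩
      show kroneckerOneLieHom (A l) ∈ H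
      simpa using hgen1 l
    have h2 : kroneckerOneLieHom X ∈ H := hle hX
    simpa using h2
  -- Step B : `k ⊗ χ ⊆ H`
  have key1 : ∀ X ∈ k, X ⊗ₖ χ ∈ H := by
    set J : Submodule ℝ (Matrix (Fin N) (Fin N) ℂ) :=
      g.toSubmodule ⊓ Submodule.comap (KR χ) H.toSubmodule with hJ
    have hmemJ : ∀ Y, Y ∈ J ↔ (Y ∈ g ∧ Y ⊗ₖ χ ∈ H) := by
      intro Y
      rw [hJ, Submodule.mem_inf, Submodule.mem_comap]
      simp
    have hAiJ : A i ∈ J := (hmemJ _).2 ⟨hAg i, hgenχ⟩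
    have hadJ : ∀ X ∈ g, ∀ Y ∈ J, ⁅X, Y⁆ ∈ J := by
      intro X hX Y hY
      obtain ⟨hYg, hYχ⟩ := (hmemJ Y).1 hY
      refine (hmemJ _).2 ⟨g.lie_mem hX hYg, ?_⟩
      rw [← lie_kronecker_one_left X Y χ]
      exact H.lie_mem (hA1 X hX) hYχ
    set i' : Fin 2 := if i = 0 then 1 else 0 with hi'
    have hii' : ∀ l : Fin 2, l = i ∨ l = i' := by
      rw [hi']
      have hd : ∀ i l : Fin 2, l = i ∨ l = (if i = 0 then 1 else 0) := by decide
      exact hd i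
    set V := (Submodule.span ℝ {A i'}) ⊔ J with hV
    have hJV : J ≤ V := le_sup_right
    have hVlie : ∀ u ∈ V, ∀ v ∈ V, ⁅u, v⁆ ∈ J := by
      intro u hu v hv
      rw [hV, Submodule.mem_sup] at hu hv
      obtain ⟨a, ha, y, hy, rfl⟩ := hu
      obtain ⟨b, hb, z, hz, rfl⟩ := hv
      obtain ⟨c, rfl⟩ := Submodule.mem_span_singleton.1 ha
      obtain ⟨c', rfl⟩ := Submodule.mem_span_singleton.1 hb
      have hJg : ∀ w, w ∈ J → w ∈ g := fun w hw => ((hmemJ w).1 hw).1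
      have h1 : ⁅A i', z⁆ ∈ J := hadJ _ (hAg i') _ hz
      have h2 : ⁅y, A i'⁆ ∈ J := by
        rw [← lie_skew y (A i')]
        exact J.neg_mem (hadJ _ (hAg i') _ hy)
      have h3 : ⁅y, z⁆ ∈ J := hadJ _ (hJg y hy) _ hz
      have hself : ⁅A i', A i'⁆ ∈ J := by rw [lie_self]; exact J.zero_mem
      simp only [add_lie, lie_add, smul_lie, lie_smul]
      exact J.add_mem (J.smul_mem _ (J.add_mem (J.smul_mem _ hself) h2))
        (J.add_mem (J.smul_mem _ h1) h3)
    set VLie : LieSubalgebra ℝ (Matrix (Fin N) (Fin N) ℂ) :=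
      { V with lie_mem' := fun {x y} hx hy => hJV (hVlie x hx y hy) } with hVLie
    have hgV : ∀ u ∈ g, u ∈ V := by
      have hle : g ≤ VLie := by
        rw [hg, DLA]
        apply LieSubalgebra.lieSpan_le.2
        rintro x ⟨l, rfl⟩
        rcases hii' l with h | h
        · rw [h]; exact hJV hAiJ
        · rw [h]
          exact Submodule.mem_sup_left (Submodule.mem_span_singleton_self (A i'))
      exact fun u hu => hle hu
    have hkJ : k ≤ J := by
      rw [hk, commSub, Submodule.span_le]
      rintro x ⟨u, hu, v, hv, rfl⟩
      exact hVlie u (hgV u hu) v (hgV v hv)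
    exact fun X hX => ((hmemJ X).1 (hkJ hX)).2
  -- Step B' : `k ⊗ χ^a ⊆ H` for all `a`
  have keya : ∀ a : ℕ, ∀ X ∈ k, X ⊗ₖ (χ ^ a) ∈ H := by
    intro a
    induction a with
    | zero => intro X hX; rw [pow_zero]; exact hA1 X (hk_le_g hX)
    | succ a ih =>
      intro X hX
      have hXkk := hperf hX
      clear hX
      induction hXkk using Submodule.span_induction with
      | mem x hx =>
        obtain ⟨u, hu, v, hv, rfl⟩ := hx
        have hcomm : χ ^ a * χ = χ * χ ^ a := by rw [← pow_succ, ← pow_succ']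
        have he : ⁅u, v⁆ ⊗ₖ (χ ^ (a + 1)) = ⁅u ⊗ₖ (χ ^ a), v ⊗ₖ χ⁆ := by
          rw [pow_succ]
          exact (lie_kronecker_comm u v _ _ hcomm).symm
        rw [he]
        exact H.lie_mem (ih u hu) (key1 v hv)
      | zero => rw [zero_kronecker]; exact H.zero_mem
      | add x y hx hy h1 h2 => rw [add_kronecker]; exact H.add_mem h1 h2
      | smul c x hx h1 => rw [smul_kronecker]; exact H.smul_mem c h1
  -- Step C : `k ⊗ P j ⊆ H`
  have keyP : ∀ j, ∀ X ∈ k, X ⊗ₖ P j ∈ H := by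
    intro j X hX
    obtain ⟨c, hc⟩ := hPpow j
    rw [hc, ← KL_apply, map_sum]
    have : ∀ a : Fin K, KL X (c a • χ ^ (a : ℕ)) ∈ H.toSubmodule := by
      intro a
      rw [_root_.map_smul]
      exact H.smul_mem _ (keya _ X hX)
    exact Submodule.sum_mem H.toSubmodule fun a _ => this a
  -- the generating set of the upper bound
  set gPgen : Set (Matrix (Fin N × Fin M) (Fin N × Fin M) ℂ) :=
    {x | ∃ X ∈ g, ∃ j : Fin K, x = X ⊗ₖ P j} with hgPgen
  have hsub : ∀ (X Y : Matrix (Fin N) (Fin N) ℂ) (j : Fin K),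
      (X * Y) ⊗ₖ P j - (Y * X) ⊗ₖ P j = ⁅X, Y⁆ ⊗ₖ P j := by
    intro X Y j
    rw [Ring.lie_def]
    exact (map_sub (KR (P j)) _ _).symm
  have hbrkgen : ∀ (X Y : Matrix (Fin N) (Fin N) ℂ) (j l : Fin K), X ∈ g → Y ∈ g →
      ⁅X ⊗ₖ P j, Y ⊗ₖ P l⁆ ∈ T := by
    intro X Y j l hX hY
    rw [lie_kronecker X Y (P j) (P l)]
    by_cases h : j = l
    · subst h
      rw [hPP j j, if_pos rfl, hsub]
      exact Submodule.subset_span ⟨⁅X, Y⁆, lie_mem_commSub hX hY, j, rfl⟩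
    · rw [hPP j l, if_neg h, hPP l j, if_neg (fun hh => h hh.symm),
        kronecker_zero, kronecker_zero, sub_zero]
      exact T.zero_mem
  have hclosed : ∀ x ∈ gPgen, ∀ y ∈ gPgen, ⁅x, y⁆ ∈ Submodule.span ℝ gPgen := by
    rintro x ⟨X, hX, j, rfl⟩ y ⟨Y, hY, l, rfl⟩
    rw [lie_kronecker X Y (P j) (P l)]
    by_cases h : j = l
    · subst h
      rw [hPP j j, if_pos rfl, hsub]
      exact Submodule.subset_span ⟨⁅X, Y⁆, g.lie_mem hX hY, j, rfl⟩
    · rw [hPP j l, if_neg h, hPP l j, if_neg (fun hh => h hh.symm),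
        kronecker_zero, kronecker_zero, sub_zero]
      exact Submodule.zero_mem _
  set gPAlg : LieSubalgebra ℝ (Matrix (Fin N × Fin M) (Fin N × Fin M) ℂ) :=
    { Submodule.span ℝ gPgen with
      lie_mem' := fun {x y} hx hy => lie_span_le_of_lie_gen hclosed x hx y hy } with hgPAlg
  have hHgP : ∀ u ∈ H, u ∈ Submodule.span ℝ gPgen := by
    have hle : H ≤ gPAlg := by
      rw [hH, DLA]
      apply LieSubalgebra.lieSpan_le.2
      rintro x (⟨l, rfl⟩ | rfl)
      · show A l ⊗ₖ (1 : Matrix (Fin M) (Fin M) ℂ) ∈ gPAlg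
        have he : A l ⊗ₖ (1 : Matrix (Fin M) (Fin M) ℂ) = ∑ j, A l ⊗ₖ P j := by
          rw [← hPsum, ← KL_apply, map_sum]
          rfl
        rw [he]
        exact Submodule.sum_mem _ fun j _ => Submodule.subset_span ⟨A l, hAg l, j, rfl⟩
      · show A i ⊗ₖ χ ∈ gPAlg
        obtain ⟨c, hc⟩ := hchi1
        have he : A i ⊗ₖ χ = ∑ j, c j • (A i ⊗ₖ P j) := by
          rw [hc, ← KL_apply, map_sum]
          refine Finset.sum_congr rfl fun j _ => ?_
          rw [show ((c j : ℂ)) • P j = c j • P j from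
            (RCLike.real_smul_eq_coe_smul (K := ℂ) (c j) (P j)).symm, _root_.map_smul, KL_apply]
        rw [he]
        exact Submodule.sum_mem _ fun j _ =>
          Submodule.smul_mem _ _ (Submodule.subset_span ⟨A i, hAg i, j, rfl⟩)
    exact fun u hu => hle hu
  -- conclusion
  apply le_antisymm
  · rw [commSub, Submodule.span_le]
    rintro x ⟨u, hu, v, hv, rfl⟩
    refine lie_span_le_of_lie_gen ?_ u (hHgP u hu) v (hHgP v hv)
    rintro x ⟨X, hX, j, rfl⟩ y ⟨Y, hY, l, rfl⟩
    exact hbrkgen X Y j l hX hY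
  · rw [hT, Submodule.span_le]
    rintro x ⟨X, hX, j, rfl⟩
    have hXkk := hperf hX
    clear hX
    induction hXkk using Submodule.span_induction with
    | mem x hx =>
      obtain ⟨u, hu, v, hv, rfl⟩ := hx
      have hPj : P j * P j = P j := by simpa using hPP j j
      rw [← lie_kronecker_idem u v (P j) hPj]
      exact Submodule.subset_span
        ⟨u ⊗ₖ P j, keyP j u hu, v ⊗ₖ P j, keyP j v hv, rfl⟩
    | zero => rw [zero_kronecker]; exact Submodule.zero_mem _
    | add x y hx hy h1 h2 => rw [add_kronecker]; exact Submodule.add_mem _ h1 h2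
    | smul c x hx h1 => rw [smul_kronecker]; exact Submodule.smul_mem _ c h1
end c5

section c6
variable {M K : ℕ}

/-- Spectral projections of a Hermitian matrix with `K` distinct eigenvalues. -/
lemma spectral_package (χ : Matrix (Fin M) (Fin M) ℂ) (hχ : χ.IsHermitian)
    (hK : (spectrum ℂ χ).ncard = K) :
    ∃ (P : Fin K → Matrix (Fin M) (Fin M) ℂ) (lam : Fin K → ℝ),
      Function.Injective lam ∧
      (∀ j l, P j * P l = if j = l then P j else 0) ∧
      (∑ j, P j = 1) ∧
      (∀ a : ℕ, χ ^ a = ∑ j, ((lam j : ℂ) ^ a) • P j) ∧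
      (∀ j, P j ≠ 0) := by
  classical
  set U : Matrix (Fin M) (Fin M) ℂ := (hχ.eigenvectorUnitary : Matrix (Fin M) (Fin M) ℂ)
    with hUdef
  set ev : Fin M → ℝ := hχ.eigenvalues with hev
  have hU1 : U * star U = 1 := (Matrix.mem_unitaryGroup_iff).mp hχ.eigenvectorUnitary.2
  have hU2 : star U * U = 1 := (Matrix.mem_unitaryGroup_iff').mp hχ.eigenvectorUnitary.2
  have hspec : χ = U * Matrix.diagonal (fun m => (ev m : ℂ)) * star U := hχ.spectral_theorem
  have hspectrum : spectrum ℂ χ = Set.range (fun m => (ev m : ℂ)) := by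
    conv_lhs => rw [hspec]
    rw [hUdef, Unitary.spectrum_star_right_conjugate, spectrum_diagonal]
  have hcard' : Fintype.card (Set.range ev) = K := by
    have himg : Set.range (fun m => (ev m : ℂ)) = Complex.ofReal '' Set.range ev := by
      rw [← Set.range_comp]; rfl
    have hcard : (Set.range ev).ncard = K := by
      rw [← hK, hspectrum, himg, Set.ncard_image_of_injective _ Complex.ofReal_injective]
    rw [← Set.toFinset_card, ← Set.ncard_eq_toFinset_card', hcard]
  set e : ↥(Set.range ev) ≃ Fin K := Fintype.equivFinOfCardEq hcard' with he
  set lam : Fin K → ℝ := fun j => ((e.symm j : ℝ)) with hlam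
  have hlaminj : Function.Injective lam :=
    fun a b hab => e.symm.injective (Subtype.coe_injective hab)
  have hlammem : ∀ j, lam j ∈ Set.range ev := fun j => (e.symm j).2
  have hexu : ∀ m : Fin M, ∃! j, lam j = ev m := by
    intro m
    refine ⟨e ⟨ev m, ⟨m, rfl⟩⟩, ?_, ?_⟩
    · show ((e.symm (e ⟨ev m, _⟩) : ℝ)) = ev m
      rw [Equiv.symm_apply_apply]
    · intro j hj
      have : e.symm j = ⟨ev m, ⟨m, rfl⟩⟩ := Subtype.ext hj
      rw [← Equiv.apply_symm_apply e j, this]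
  set D : Fin K → Matrix (Fin M) (Fin M) ℂ :=
    fun j => Matrix.diagonal (fun m => if ev m = lam j then 1 else 0) with hD
  set P : Fin K → Matrix (Fin M) (Fin M) ℂ := fun j => U * D j * star U with hP
  have hQmul : ∀ C E : Matrix (Fin M) (Fin M) ℂ,
      (U * C * star U) * (U * E * star U) = U * (C * E) * star U := by
    intro C E
    simp only [← mul_assoc]
    rw [mul_assoc (U * C) (star U) U, hU2, mul_one, mul_assoc U C E]
  have hdiagsum : ∀ (f : Fin K → Fin M → ℂ),
      ∑ j, Matrix.diagonal (f j) = Matrix.diagonal (fun m => ∑ j, f j m) := by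
    intro f
    ext m m'
    by_cases hmm : m = m'
    · subst hmm; simp [Matrix.sum_apply]
    · simp [Matrix.sum_apply, Matrix.diagonal_apply_ne, hmm]
  have hDD : ∀ j l, D j * D l = if j = l then D j else 0 := by
    intro j l
    rw [hD]
    dsimp only
    rw [Matrix.diagonal_mul_diagonal]
    by_cases h : j = l
    · subst h
      rw [if_pos rfl]
      refine congrArg Matrix.diagonal (funext fun m => ?_)
      by_cases hm : ev m = lam j <;> simp [hm]
    · rw [if_neg h]
      have hz : (fun m => (if ev m = lam j then (1:ℂ) else 0) * (if ev m = lam l then 1 else 0))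
          = fun _ => 0 := by
        funext m
        by_cases hmj : ev m = lam j
        · have h2 : ¬ lam j = lam l := fun hml => h (hlaminj hml)
          simp [hmj, h2]
        · simp [hmj]
      rw [hz, Matrix.diagonal_zero]
  have hPP : ∀ j l, P j * P l = if j = l then P j else 0 := by
    intro j l
    rw [hP]
    dsimp only
    rw [hQmul, hDD j l]
    by_cases h : j = l
    · rw [if_pos h, if_pos h]
    · rw [if_neg h, if_neg h, mul_zero, zero_mul]
  have hPsum : ∑ j, P j = 1 := by
    have hDsum : ∑ j, D j = 1 := by
      rw [hD]
      dsimp only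
      rw [hdiagsum]
      have hone : (fun m => ∑ j : Fin K, if ev m = lam j then (1:ℂ) else 0) = fun _ => 1 := by
        funext m
        obtain ⟨j0, hj0, huniq⟩ := hexu m
        rw [Finset.sum_eq_single j0]
        · rw [if_pos hj0.symm]
        · intro b _ hb
          rw [if_neg (fun hc => hb (huniq b hc.symm))]
        · intro hc
          exact absurd (Finset.mem_univ j0) hc
      rw [hone, Matrix.diagonal_one]
    calc ∑ j, P j = U * (∑ j, D j) * star U := by rw [Finset.mul_sum, Finset.sum_mul]
      _ = 1 := by rw [hDsum, mul_one, hU1]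
  have hpow : ∀ a : ℕ, χ ^ a = U * (Matrix.diagonal (fun m => (ev m : ℂ))) ^ a * star U := by
    intro a
    induction a with
    | zero => rw [pow_zero, pow_zero, mul_one, hU1]
    | succ a ih =>
      rw [pow_succ, pow_succ, ih]
      conv_lhs => rw [hspec]
      rw [hQmul]
  have hchia : ∀ a : ℕ, χ ^ a = ∑ j, ((lam j : ℂ) ^ a) • P j := by
    intro a
    have hDa : Matrix.diagonal ((fun m => ((ev m : ℂ))) ^ a) = ∑ j, ((lam j : ℂ) ^ a) • D j := by
      have hsm : ∀ j, ((lam j : ℂ) ^ a) • D j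
          = Matrix.diagonal (fun m => if ev m = lam j then (lam j : ℂ) ^ a else 0) := by
        intro j
        rw [hD]
        dsimp only
        rw [← Matrix.diagonal_smul]
        refine congrArg Matrix.diagonal (funext fun m => ?_)
        by_cases hm : ev m = lam j <;> simp [hm]
      rw [Finset.sum_congr rfl (fun j _ => hsm j), hdiagsum]
      refine congrArg Matrix.diagonal (funext fun m => ?_)
      obtain ⟨j0, hj0, huniq⟩ := hexu m
      rw [Finset.sum_eq_single j0]
      · rw [if_pos hj0.symm, Pi.pow_apply, ← hj0]
      · intro b _ hb
        rw [if_neg (fun hc => hb (huniq b hc.symm))]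
      · intro hc
        exact absurd (Finset.mem_univ j0) hc
    rw [hpow a, Matrix.diagonal_pow, hDa, Finset.mul_sum, Finset.sum_mul]
    refine Finset.sum_congr rfl fun j _ => ?_
    rw [mul_smul_comm, smul_mul_assoc]
  have hPne : ∀ j, P j ≠ 0 := by
    intro j h0
    have htr : (P j).trace = ∑ m, (if ev m = lam j then (1:ℂ) else 0) := by
      rw [hP]
      dsimp only
      rw [Matrix.trace_mul_cycle, hU2, one_mul, Matrix.trace_diagonal]
    rw [h0, Matrix.trace_zero] at htr
    obtain ⟨m0, hm0⟩ := hlammem j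
    have hne : (0:ℂ) ≠ ∑ m, (if ev m = lam j then (1:ℂ) else 0) := by
      rw [Finset.sum_boole]
      have hmem : m0 ∈ Finset.univ.filter (fun m => ev m = lam j) :=
        Finset.mem_filter.2 ⟨Finset.mem_univ _, hm0⟩
      have hpos : 0 < (Finset.univ.filter (fun m => ev m = lam j)).card :=
        Finset.card_pos.2 ⟨m0, hmem⟩
      exact (Ne.symm (Nat.cast_ne_zero.2 hpos.ne'))
    exact hne htr
  exact ⟨P, lam, hlaminj, hPP, hPsum, hchia, hPne⟩

end c6

section c7

/-- Lagrange/Vandermonde interpolation: each spectral projection is a real polynomial in `χ`. -/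
lemma vandermonde_combination {K M : ℕ} (lam : Fin K → ℝ) (hinj : Function.Injective lam)
    (χ : Matrix (Fin M) (Fin M) ℂ) (P : Fin K → Matrix (Fin M) (Fin M) ℂ)
    (hchia : ∀ a : ℕ, χ ^ a = ∑ j, ((lam j : ℂ) ^ a) • P j) (j : Fin K) :
    ∃ c : Fin K → ℝ, P j = ∑ a, c a • χ ^ (a : ℕ) := by
  classical
  set V := Matrix.vandermonde lam with hV
  have hdet : V.det ≠ 0 := Matrix.det_vandermonde_ne_zero_iff.mpr hinj
  have hVV : V * V⁻¹ = 1 := Matrix.mul_nonsing_inv V (isUnit_iff_ne_zero.mpr hdet)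
  have hsum : ∀ l : Fin K, ∑ a, V⁻¹ a j * lam l ^ (a : ℕ) = if l = j then 1 else 0 := by
    intro l
    have h1 : (V * V⁻¹) l j = (1 : Matrix (Fin K) (Fin K) ℝ) l j := by rw [hVV]
    rw [Matrix.mul_apply, Matrix.one_apply] at h1
    rw [← h1]
    refine Finset.sum_congr rfl fun a _ => ?_
    rw [hV, Matrix.vandermonde_apply, mul_comm]
  refine ⟨fun a => V⁻¹ a j, ?_⟩
  symm
  calc ∑ a : Fin K, V⁻¹ a j • χ ^ (a : ℕ)
      = ∑ a : Fin K, ∑ l, V⁻¹ a j • (((lam l : ℂ)) ^ (a : ℕ) • P l) := by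
        refine Finset.sum_congr rfl fun a _ => ?_
        rw [hchia (a : ℕ), Finset.smul_sum]
    _ = ∑ l, ∑ a : Fin K, (((V⁻¹ a j * lam l ^ (a : ℕ) : ℝ) : ℂ)) • P l := by
        rw [Finset.sum_comm]
        refine Finset.sum_congr rfl fun l _ => Finset.sum_congr rfl fun a _ => ?_
        rw [← smul_assoc]
        congr 1
        rw [Complex.real_smul, ← Complex.ofReal_pow, ← Complex.ofReal_mul]
    _ = ∑ l, (((if l = j then 1 else 0 : ℝ)) : ℂ) • P l := by
        refine Finset.sum_congr rfl fun l _ => ?_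
        rw [← Finset.sum_smul, ← Complex.ofReal_sum, hsum l]
    _ = P j := by
        have hite : ∀ l : Fin K, (((if l = j then 1 else 0 : ℝ)) : ℂ) • P l
            = if l = j then P l else 0 := by
          intro l; by_cases h : l = j <;> simp [h]
        rw [Finset.sum_congr rfl fun l _ => hite l, Finset.sum_ite_eq' Finset.univ j P,
          if_pos (Finset.mem_univ j)]

end c7

/-- Restrict the codomain of a Lie algebra morphism to a Lie subalgebra containing its range. -/
noncomputable def lieCodRestrict {L : Type*} [LieRing L] [LieAlgebra ℝ L] {n : Type*} [Fintype n]
    [DecidableEq n] (h : LieSubalgebra ℝ (Matrix n n ℂ)) (f : L →ₗ⁅ℝ⁆ Matrix n n ℂ)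
    (hf : ∀ x, f x ∈ h) : L →ₗ⁅ℝ⁆ ↥h :=
  { toFun := fun x => ⟨f x, hf x⟩,
    map_add' := fun x y => Subtype.ext (f.map_add x y),
    map_smul' := fun c x => Subtype.ext (f.map_smul c x),
    map_lie' := fun {x y} => Subtype.ext (f.map_lie x y) }

@[simp] lemma lieCodRestrict_apply {L : Type*} [LieRing L] [LieAlgebra ℝ L] {n : Type*}
    [Fintype n] [DecidableEq n] (h : LieSubalgebra ℝ (Matrix n n ℂ))
    (f : L →ₗ⁅ℝ⁆ Matrix n n ℂ) (hf : ∀ x, f x ∈ h) (x : L) :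
    (lieCodRestrict h f hf x : Matrix n n ℂ) = f x := rfl

open scoped DirectSum


/-- For a two-element dynamical generating set `𝒜 = {A₁, A₂}` and Hermitian `χ` with
exactly `K` distinct eigenvalues, for each `i ∈ {1,2}` the commutator subalgebra of the
DLA generated by `𝒜_i = {A₁ ⊗ I_M, A₂ ⊗ I_M, A_i ⊗ χ}` is isomorphic, as a real Lie
algebra, to the direct sum of `K` copies of `[g_𝒜, g_𝒜]`. -/
theorem stmt14 {N M K : ℕ} (A : Fin 2 → Matrix (Fin N) (Fin N) ℂ)
    (hA : IsDynGenSet A)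
    (χ : Matrix (Fin M) (Fin M) ℂ) (hχ : χ.IsHermitian)
    (hK : (spectrum ℂ χ).ncard = K) :
    ∀ i : Fin 2,
      ∃ (h : LieSubalgebra ℝ (Matrix (Fin N × Fin M) (Fin N × Fin M) ℂ))
        (h0 : LieSubalgebra ℝ (Matrix (Fin N) (Fin N) ℂ)),
        h.toSubmodule =
          commSub (DLA ((Set.range fun j => A j ⊗ₖ (1 : Matrix (Fin M) (Fin M) ℂ)) ∪
            {A i ⊗ₖ χ})) ∧
        h0.toSubmodule = commSub (DLA (Set.range A)) ∧
        Nonempty (↥h ≃ₗ⁅ℝ⁆ (⨁ _ : Fin K, ↥h0)) := by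
  classical
  intro i
  obtain ⟨P, lam, hlaminj, hPP, hPsum, hchia, hPne⟩ := spectral_package χ hχ hK
  have hsa : ∀ l, (A l)ᴴ = -(A l) := hA.2.2.2
  have hPpow : ∀ j, ∃ c : Fin K → ℝ, P j = ∑ a, c a • χ ^ (a : ℕ) :=
    fun j => vandermonde_combination lam hlaminj χ P hchia j
  have hchi1 : ∃ c : Fin K → ℝ, χ = ∑ j, ((c j : ℂ)) • P j := ⟨lam, by simpa using hchia 1⟩
  have hmain := main_commSub A hsa i χ P hPP hPsum hchi1 hPpow
  set g := DLA (Set.range A) with hg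
  set SS := (Set.range fun j => A j ⊗ₖ (1 : Matrix (Fin M) (Fin M) ℂ)) ∪ {A i ⊗ₖ χ} with hSS
  set k := commSub g with hk
  refine ⟨commSubAlg (DLA SS), commSubAlg g, rfl, rfl, ?_⟩
  have hPidem : ∀ j, P j * P j = P j := fun j => by simpa using hPP j j
  set h0 := commSubAlg g with hh0
  set hb := commSubAlg (DLA SS) with hhb
  set f : ∀ _ : Fin K, ↥h0 →ₗ⁅ℝ⁆ Matrix (Fin N × Fin M) (Fin N × Fin M) ℂ :=
    fun j => (kroneckerIdemLieHom (P j) (hPidem j)).comp h0.incl with hf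
  have hfpair : Pairwise fun j l => ∀ (x y : ↥h0), ⁅f j x, f l y⁆ = 0 := by
    intro j l hjl x y
    show ⁅((x : Matrix (Fin N) (Fin N) ℂ)) ⊗ₖ P j, ((y : Matrix (Fin N) (Fin N) ℂ)) ⊗ₖ P l⁆ = 0
    rw [lie_kronecker, hPP j l, if_neg hjl, hPP l j, if_neg (fun hc => hjl hc.symm),
      kronecker_zero, kronecker_zero, sub_zero]
  set Ψ : (⨁ _ : Fin K, ↥h0) →ₗ⁅ℝ⁆ Matrix (Fin N × Fin M) (Fin N × Fin M) ℂ :=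
    DirectSum.toLieAlgebra (Matrix (Fin N × Fin M) (Fin N × Fin M) ℂ) f hfpair with hΨdef
  have hΨof : ∀ (j : Fin K) (y : ↥h0),
      Ψ (DirectSum.of (fun _ : Fin K => ↥h0) j y)
        = ((y : Matrix (Fin N) (Fin N) ℂ)) ⊗ₖ P j := by
    intro j y
    have h1 : Ψ (DirectSum.of (fun _ : Fin K => ↥h0) j y)
        = DirectSum.toModule ℝ (Fin K) _ (fun l => (f l : ↥h0 →ₗ[ℝ] _))
            (DirectSum.lof ℝ (Fin K) (fun _ => ↥h0) j y) := rfl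
    rw [h1, DirectSum.toModule_lof]
    rfl
  have hΨsum : ∀ x : ⨁ _ : Fin K, ↥h0,
      Ψ x = ∑ j, ((x j : Matrix (Fin N) (Fin N) ℂ)) ⊗ₖ P j := by
    intro x
    conv_lhs => rw [← DirectSum.sum_univ_of x]
    exact (map_sum Ψ.toLinearMap (fun j => DirectSum.of (fun _ : Fin K => ↥h0) j (x j))
      Finset.univ).trans (Finset.sum_congr rfl fun j _ => hΨof j (x j))
  have hmem : ∀ x, Ψ x ∈ hb := by
    intro x
    show Ψ x ∈ commSub (DLA SS)
    rw [hΨsum, hmain]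
    exact Submodule.sum_mem _ fun j _ =>
      Submodule.subset_span ⟨((x j : Matrix (Fin N) (Fin N) ℂ)), (x j).2, j, rfl⟩
  set Ψ' := lieCodRestrict hb Ψ hmem with hΨ'
  have hextract : ∀ (Z : Fin K → Matrix (Fin N) (Fin N) ℂ),
      (∑ j, Z j ⊗ₖ P j) = 0 → ∀ j, Z j = 0 := by
    intro Z hZ j
    have h1 : ((1 : Matrix (Fin N) (Fin N) ℂ) ⊗ₖ P j) * (∑ l, Z l ⊗ₖ P l)
        * ((1 : Matrix (Fin N) (Fin N) ℂ) ⊗ₖ P j) = Z j ⊗ₖ P j := by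
      rw [Finset.mul_sum, Finset.sum_mul, Finset.sum_eq_single j]
      · rw [← mul_kronecker_mul, ← mul_kronecker_mul, one_mul, mul_one, hPidem j, hPidem j]
      · intro l _ hl
        rw [← mul_kronecker_mul, ← mul_kronecker_mul, hPP j l,
          if_neg (fun hc => hl hc.symm), zero_mul, kronecker_zero]
      · intro hc; exact absurd (Finset.mem_univ j) hc
    rw [hZ, mul_zero, zero_mul] at h1
    obtain ⟨p, q, hpq⟩ : ∃ p q, P j p q ≠ 0 := by
      by_contra hc
      push_neg at hc
      exact hPne j (Matrix.ext fun p q => hc p q)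
    ext a c
    have h3 : (Z j ⊗ₖ P j) (a, p) (c, q) = 0 := by rw [← h1]; simp
    rw [Matrix.kroneckerMap_apply] at h3
    rcases mul_eq_zero.1 h3 with h4 | h4
    · simpa using h4
    · exact absurd h4 hpq
  have hinjΨ : ∀ x, Ψ x = 0 → x = 0 := by
    intro x hx
    have hz : ∀ j, ((x j : Matrix (Fin N) (Fin N) ℂ)) = 0 :=
      hextract (fun j => ((x j : Matrix (Fin N) (Fin N) ℂ))) (by rw [← hΨsum]; exact hx)
    have hcomp : ∀ j, x j = 0 := fun j => Subtype.ext (by simpa using hz j)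
    calc x = ∑ j, DirectSum.of (fun _ : Fin K => ↥h0) j (x j) := (DirectSum.sum_univ_of x).symm
      _ = ∑ _j : Fin K, (0 : ⨁ _ : Fin K, ↥h0) :=
        Finset.sum_congr rfl fun j _ => by rw [hcomp j]; exact map_zero _
      _ = 0 := Finset.sum_const_zero
  have hbij : Function.Bijective Ψ' := by
    constructor
    · intro x y hxy
      have hval : Ψ x = Ψ y := congrArg Subtype.val hxy
      have hsubeq : Ψ (x - y) = Ψ x - Ψ y := Ψ.toLinearMap.map_sub x y
      have hsub : Ψ (x - y) = 0 := by
        rw [hsubeq, sub_eq_zero]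
        exact hval
      exact sub_eq_zero.1 (hinjΨ _ hsub)
    · intro y
      have hy : (y : Matrix (Fin N × Fin M) (Fin N × Fin M) ℂ)
          ∈ Submodule.span ℝ {x | ∃ X ∈ k, ∃ j : Fin K, x = X ⊗ₖ P j} := by
        rw [← hmain]; exact y.2
      have hex : ∀ z, z ∈ Submodule.span ℝ {x | ∃ X ∈ k, ∃ j : Fin K, x = X ⊗ₖ P j} →
          ∃ x, Ψ x = z := by
        intro z hz
        induction hz using Submodule.span_induction with
        | mem w hw =>
          obtain ⟨X, hX, j, rfl⟩ := hw
          exact ⟨DirectSum.of (fun _ : Fin K => ↥h0) j ⟨X, hX⟩, hΨof j ⟨X, hX⟩⟩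
        | zero => exact ⟨0, Ψ.toLinearMap.map_zero⟩
        | add a b _ _ h1 h2 =>
          obtain ⟨x1, hx1⟩ := h1
          obtain ⟨x2, hx2⟩ := h2
          have hadd : Ψ (x1 + x2) = Ψ x1 + Ψ x2 := Ψ.toLinearMap.map_add x1 x2
          exact ⟨x1 + x2, by rw [hadd, hx1, hx2]⟩
        | smul c a _ h1 =>
          obtain ⟨x1, hx1⟩ := h1
          have hsm : Ψ (c • x1) = c • Ψ x1 := Ψ.toLinearMap.map_smul c x1
          exact ⟨c • x1, by rw [hsm, hx1]⟩
      obtain ⟨x, hx⟩ := hex _ hy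
      exact ⟨x, Subtype.ext hx⟩
  exact ⟨(LieEquiv.ofBijective Ψ' hbij).symm⟩
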